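/- For all j ∈ ℤ and k ≥ 0 with j+k even, m_{j,k} = ∑_{i=−k}^{k} e_{j+3i}. Equivalently, the tropical evaluation M_{j,k} of the Y-pattern variable Y_{j,k} in Trop(y₁,…,y_{2n}) is the monomial M_{j,k} = ∏_{i=−k}^{k} y_{j+3i}. -/

import Mathlib

open scoped Classical

noncomputable section

/-- The standard basis vector `e_j ∈ ℤ^{ℤ/2nℤ}` at `j mod 2n` (recording the
exponent of the variable `y_j` in a Laurent monomial). -/
def evec (n : ℕ) (j : ℤ) : ZMod (2*n) → ℤ :=
  fun i => if i = (j : ZMod (2*n)) then 1 else 0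

/-- Componentwise minimum `min(0, v)` of a vector `v` with the zero vector. -/
def vmin0 (n : ℕ) (v : ZMod (2*n) → ℤ) : ZMod (2*n) → ℤ :=
  fun i => min 0 (v i)

/-- **Proposition 4.1 (the tropical monomials `M_{j,k}`).**
Let `m_{j,k} ∈ ℤ^{ℤ/2nℤ}` be the exponent vectors of the tropical evaluation of
the `Y`-pattern variables, defined by `m_{j,−1} = −e_j` for `j` odd,
`m_{j,0} = e_j` for `j` even, and
`m_{j,k} = m_{j−3,k−1} + m_{j+3,k−1} − m_{j,k−2} + min(0,m_{j−1,k−1}) +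
min(0,m_{j+1,k−1}) − min(0,m_{j−3,k−1}) − min(0,m_{j+3,k−1})` for `k ≥ 1` and
`j+k` even.  Then `m_{j,k} = ∑_{i=−k}^{k} e_{j+3i}` for all `k ≥ 0` with `j+k`
even; i.e. `M_{j,k} = ∏_{i=−k}^{k} y_{j+3i}`. -/

lemma sum_ioc_consec {α : Type*} [AddCommMonoid α] (f : ℤ → α) {a b c : ℤ}
    (h1 : a ≤ b) (h2 : b ≤ c) :
    ∑ i ∈ Finset.Ioc a b, f i + ∑ i ∈ Finset.Ioc b c, f i = ∑ i ∈ Finset.Ioc a c, f i := by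
  rw [← Finset.sum_union ?disj, Finset.Ioc_union_Ioc_eq_Ioc h1 h2]
  case disj =>
    rw [Finset.disjoint_left]
    intro x hx hx'
    simp only [Finset.mem_Ioc] at hx hx'
    omega

lemma icc_ioc (a b : ℤ) : Finset.Icc a b = Finset.Ioc (a-1) b := by
  ext x; simp only [Finset.mem_Icc, Finset.mem_Ioc]; omega

lemma icc_combine {α : Type*} [AddCommGroup α] (g : ℤ → α) (a b : ℤ) (hab : a ≤ b) :
    ∑ i ∈ Finset.Icc (a-2) b, g i + ∑ i ∈ Finset.Icc a (b+2), g i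
      - ∑ i ∈ Finset.Icc a b, g i = ∑ i ∈ Finset.Icc (a-2) (b+2), g i := by
  rw [icc_ioc (a-2) b, icc_ioc a (b+2), icc_ioc a b, icc_ioc (a-2) (b+2)]
  have e1 := sum_ioc_consec g (show a-2-1 ≤ a-1 by omega) (show a-1 ≤ b by omega)
  have e2 := sum_ioc_consec g (show a-1 ≤ b by omega) (show b ≤ b+2 by omega)
  have e3 := sum_ioc_consec g (show a-2-1 ≤ b by omega) (show b ≤ b+2 by omega)
  rw [← e3, ← e1, ← e2]
  abel

lemma sum_shift {α : Type*} [AddCommMonoid α] (f : ℤ → α) (a b c : ℤ) :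
    ∑ i ∈ Finset.Icc (a+c) (b+c), f i = ∑ i ∈ Finset.Icc a b, f (i + c) := by
  rw [← Finset.map_add_right_Icc, Finset.sum_map]
  rfl

lemma evec_nonneg (n : ℕ) (j : ℤ) (x : ZMod (2*n)) : 0 ≤ evec n j x := by
  unfold evec; split <;> norm_num

lemma vmin0_evec (n : ℕ) (j : ℤ) : vmin0 n (evec n j) = 0 := by
  funext x
  simpa [vmin0] using min_eq_left (evec_nonneg n j x)

lemma vmin0_sum (n : ℕ) (s : Finset ℤ) (g : ℤ → ℤ) :
    vmin0 n (∑ i ∈ s, evec n (g i)) = 0 := by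
  funext x
  have h : 0 ≤ (∑ i ∈ s, evec n (g i)) x := by
    rw [Finset.sum_apply]
    exact Finset.sum_nonneg fun i _ => evec_nonneg n (g i) x
  simpa [vmin0] using min_eq_left h

theorem stmt5 (n : ℕ) (hn : 2 ≤ n) (M : ℤ → ℤ → (ZMod (2*n) → ℤ))
    (h1 : ∀ j : ℤ, Odd j → M j (-1) = -(evec n j))
    (h2 : ∀ j : ℤ, Even j → M j 0 = evec n j)
    (h3 : ∀ j k : ℤ, 1 ≤ k → Even (j+k) →
      M j k = M (j-3) (k-1) + M (j+3) (k-1) - M j (k-2)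
        + vmin0 n (M (j-1) (k-1)) + vmin0 n (M (j+1) (k-1))
        - vmin0 n (M (j-3) (k-1)) - vmin0 n (M (j+3) (k-1))) :
    ∀ j k : ℤ, 0 ≤ k → Even (j+k) →
      M j k = ∑ i ∈ Finset.Icc (-k) k, evec n (j+3*i) := by
  have key : ∀ K : ℕ, ∀ j : ℤ, Even (j + K) →
      M j K = ∑ i ∈ Finset.Icc (-(K:ℤ)) K, evec n (j+3*i) := by
    intro K
    induction K using Nat.strong_induction_on with
    | _ K ih =>
      match K with
      | 0 =>
        intro j hj
        rw [show ((0:ℕ):ℤ) = 0 by norm_num, h2 j (by simpa using hj)]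
        rw [show Finset.Icc (-(0:ℤ)) 0 = {0} by decide]
        simp
      | 1 =>
        intro j hj
        have hj1 : Even (j + 1) := by exact_mod_cast hj
        have hjodd : Odd j := by
          rcases Int.even_or_odd j with h | h
          · exfalso; rcases h with ⟨m, rfl⟩; rcases hj1 with ⟨p, hp⟩; omega
          · exact h
        rcases hjodd with ⟨m, hm⟩
        have hrec := h3 j 1 le_rfl hj1
        rw [show (1:ℤ)-1 = 0 by ring, show (1:ℤ)-2 = -1 by ring] at hrec
        have E1 : Even (j-3) := ⟨m-1, by omega⟩
        have E2 : Even (j+3) := ⟨m+2, by omega⟩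
        have E3 : Even (j-1) := ⟨m, by omega⟩
        have E4 : Even (j+1) := ⟨m+1, by omega⟩
        rw [h2 (j-3) E1, h2 (j+3) E2, h2 (j-1) E3, h2 (j+1) E4,
          h1 j ⟨m, hm⟩, vmin0_evec, vmin0_evec, vmin0_evec, vmin0_evec] at hrec
        rw [show ((1:ℕ):ℤ) = 1 by norm_num, hrec]
        rw [show Finset.Icc (-(1:ℤ)) 1 = {-1, 0, 1} from by decide]
        rw [Finset.sum_insert (by decide), Finset.sum_insert (by decide),
          Finset.sum_singleton]
        rw [show j + 3*(-1) = j - 3 by ring, show j + 3*0 = j by ring,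
          show j + 3*1 = j + 3 by ring]
        abel
      | (K+2) =>
        intro j hj
        have hKZ : ((K+2:ℕ):ℤ) = (K:ℤ)+2 := by push_cast; ring
        rw [hKZ]
        rw [hKZ] at hj
        have hje : Even (j + ((K:ℤ)+2)) := hj
        have hrec := h3 j ((K:ℤ)+2) (by omega) hje
        rw [show ((K:ℤ)+2)-1 = ((K+1:ℕ):ℤ) by push_cast; ring,
          show ((K:ℤ)+2)-2 = ((K:ℕ):ℤ) by push_cast; ring] at hrec
        rcases hje with ⟨p, hp⟩
        have i1 := ih (K+1) (by omega) (j-3) ⟨p-2, by push_cast; push_cast at hp; omega⟩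
        have i2 := ih (K+1) (by omega) (j+3) ⟨p+1, by push_cast; push_cast at hp; omega⟩
        have i3 := ih (K+1) (by omega) (j-1) ⟨p-1, by push_cast; push_cast at hp; omega⟩
        have i4 := ih (K+1) (by omega) (j+1) ⟨p, by push_cast; push_cast at hp; omega⟩
        have i5 := ih K (by omega) j ⟨p-1, by push_cast; push_cast at hp; omega⟩
        rw [i1, i2, i3, i4, i5, vmin0_sum, vmin0_sum, vmin0_sum, vmin0_sum] at hrec
        rw [hrec]
        have s1 : ∑ i ∈ Finset.Icc (-((K+1:ℕ):ℤ)) ((K+1:ℕ):ℤ), evec n (j-3+3*i)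
            = ∑ i ∈ Finset.Icc (-(K:ℤ)-2) (K:ℤ), evec n (j+3*i) := by
          rw [show (-(K:ℤ)-2) = (-((K+1:ℕ):ℤ)) + (-1) by push_cast; ring,
            show (K:ℤ) = ((K+1:ℕ):ℤ) + (-1) by push_cast; ring, sum_shift]
          exact Finset.sum_congr rfl fun i _ => by rw [show j+3*(i+(-1)) = j-3+3*i by ring]
        have s2 : ∑ i ∈ Finset.Icc (-((K+1:ℕ):ℤ)) ((K+1:ℕ):ℤ), evec n (j+3+3*i)
            = ∑ i ∈ Finset.Icc (-(K:ℤ)) ((K:ℤ)+2), evec n (j+3*i) := by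
          rw [show (-(K:ℤ)) = (-((K+1:ℕ):ℤ)) + 1 by push_cast; ring,
            show ((K:ℤ)+2) = ((K+1:ℕ):ℤ) + 1 by push_cast; ring, sum_shift]
          exact Finset.sum_congr rfl fun i _ => by rw [show j+3*(i+1) = j+3+3*i by ring]
        rw [s1, s2]
        have := icc_combine (fun i => evec n (j+3*i)) (-(K:ℤ)) (K:ℤ) (by omega)
        simp only [add_zero, sub_zero]
        rw [show (-((K:ℤ)+2)) = -(K:ℤ)-2 by ring]
        exact this
  intro j k hk he
  lift k to ℕ using hk
  exact key k j (by exact_mod_cast he)
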